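/- For x → ±1 with ±Re(x) - 1 ≥ C·|Im(x)| for some fixed C > 0, the Bernstein-ellipse parameter α(x) = log|x + √(x²-1)| satisfies α(x) = Θ(√|x ∓ 1|). -/

import Mathlib

/-- The Bernstein-ellipse parameter α(x) = log|x + √(x²-1)|, with the branch of
    the square root chosen so that |x + √(x²-1)| ≥ 1 (equivalently, the maximum
    of the two branch values, whose product has modulus 1). -/
noncomputable def bernsteinParam (x : ℂ) : ℝ :=
  Real.log (max (‖x + (x ^ 2 - 1) ^ ((1 : ℂ) / 2)‖)
    (‖x - (x ^ 2 - 1) ^ ((1 : ℂ) / 2)‖))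

lemma re_cpow_half_nonneg (z : ℂ) : 0 ≤ (z ^ ((1:ℂ)/2)).re := by
  rcases eq_or_ne z 0 with rfl | h
  · simp [Complex.zero_cpow (by norm_num : (1:ℂ)/2 ≠ 0)]
  · rw [Complex.cpow_def_of_ne_zero h, Complex.exp_re]
    apply mul_nonneg (Real.exp_nonneg _)
    apply Real.cos_nonneg_of_mem_Icc
    simp only [Complex.mul_im, Complex.log_im, Complex.log_re]
    norm_num
    constructor
    · nlinarith [Complex.neg_pi_lt_arg z, Real.pi_pos]
    · nlinarith [Complex.arg_le_pi z, Real.pi_pos]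

lemma half_le_log_one_add (r : ℝ) (h0 : 0 ≤ r) (h1 : r ≤ 1) :
    r/2 ≤ Real.log (1+r) := by
  have hp : (0:ℝ) < 1 + r := by linarith
  have h := Real.log_le_sub_one_of_pos (show (0:ℝ) < (1+r)⁻¹ by positivity)
  rw [Real.log_inv] at h
  have hi : (1+r) * (1+r)⁻¹ = 1 := mul_inv_cancel₀ (by positivity)
  nlinarith [h]

lemma bernsteinParam_neg (x : ℂ) : bernsteinParam (-x) = bernsteinParam x := by
  unfold bernsteinParam
  have h1 : (-x)^2 = x^2 := by ring
  rw [h1]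
  have h2 : -x + (x^2-1)^((1:ℂ)/2) = -(x - (x^2-1)^((1:ℂ)/2)) := by ring
  have h3 : -x - (x^2-1)^((1:ℂ)/2) = -(x + (x^2-1)^((1:ℂ)/2)) := by ring
  rw [h2, h3, norm_neg, norm_neg, max_comm]

set_option maxHeartbeats 2000000 in
lemma bernstein_pos_side (C : ℝ) (hC : 0 < C) :
    ∃ c C' ε : ℝ, 0 < c ∧ c ≤ C' ∧ 0 < ε ∧
      ∀ x : ℂ, ‖x - 1‖ < ε → x.re - 1 ≥ C * |x.im| →
        c * Real.sqrt (‖x - 1‖) ≤ bernsteinParam x ∧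
        bernsteinParam x ≤ C' * Real.sqrt (‖x - 1‖) := by
  refine ⟨2/5, 3, min (1/3) (2*C), by norm_num, by norm_num, by positivity, ?_⟩
  intro x h1 h2
  set t := ‖x - 1‖ with ht
  have ht0 : 0 ≤ t := norm_nonneg _
  have hε1 : t < 1/3 := lt_of_lt_of_le h1 (min_le_left _ _)
  have hε2 : t < 2*C := lt_of_lt_of_le h1 (min_le_right _ _)
  have hb : |x.im| ≤ t := by
    have := Complex.abs_im_le_norm (x - 1); simpa using this
  have hre1 : 1 ≤ x.re := by nlinarith [abs_nonneg x.im]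
  by_cases hx1 : x = 1
  · subst hx1
    simp [bernsteinParam, Complex.zero_cpow (by norm_num : (1:ℂ)/2 ≠ 0), ht]
  -- nontrivial case
  have hxm1 : x - 1 ≠ 0 := sub_ne_zero.mpr hx1
  have htpos : 0 < t := by
    rw [ht]; exact (norm_pos_iff.mpr hxm1)
  have h2lb : (2:ℝ) ≤ ‖x+1‖ + t := by
    have h := norm_add_le (x+1) (-(x-1))
    rw [show (x+1) + -(x-1) = 2 from by ring, norm_neg, Complex.norm_two] at h
    linarith
  have hxp1_lb : (5:ℝ)/3 ≤ ‖x+1‖ := by linarith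
  have hxp1_ub : ‖x+1‖ ≤ 7/3 := by
    have h := norm_add_le (x-1) 2
    have he : (x-1) + 2 = x + 1 := by ring
    rw [he] at h
    simp only [Complex.norm_two] at h
    linarith
  set z := x^2 - 1 with hz
  have hzfac : z = (x-1)*(x+1) := by rw [hz]; ring
  have habsz : ‖z‖ = t * ‖x+1‖ := by rw [hzfac, norm_mul, ht]
  have hz0 : z ≠ 0 := by
    rw [hzfac]
    exact mul_ne_zero hxm1 (by
      intro h; rw [h] at hxp1_lb; simp at hxp1_lb; linarith)
  set s := z ^ ((1:ℂ)/2) with hsdef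
  have hss : s * s = z := by
    rw [hsdef, ← Complex.cpow_add _ _ hz0]; norm_num
  have hres : 0 ≤ s.re := re_cpow_half_nonneg z
  have habs_s_sq : (‖s‖)^2 = ‖z‖ := by
    rw [sq, ← norm_mul, hss]
  have hzre : 0 ≤ z.re := by
    have hzre_eq : z.re = x.re^2 - x.im^2 - 1 := by
      rw [hz]; simp only [Complex.sub_re, Complex.one_re, pow_two, Complex.mul_re]
    rw [hzre_eq]
    nlinarith [h2, hb, hε2, sq_nonneg (x.re-1), sq_abs x.im, abs_nonneg x.im]
  have hre_sq : 2 * s.re^2 = ‖z‖ + z.re := by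
    have ha : ‖z‖ = s.re^2 + s.im^2 := by
      rw [← habs_s_sq, Complex.sq_norm, Complex.normSq_apply]; ring
    have hrr : z.re = s.re^2 - s.im^2 := by
      rw [← hss, Complex.mul_re]; ring
    linarith
  have hsre_sq : (16/25) * t ≤ s.re^2 := by
    have hlz : (5/3) * t ≤ ‖z‖ := by
      rw [habsz]; nlinarith [hxp1_lb, ht0]
    nlinarith [hzre]
  have hsre_lb : (4/5) * Real.sqrt t ≤ s.re := by
    have h45 : (4/5:ℝ) * Real.sqrt t = Real.sqrt ((16/25)*t) := by
      rw [Real.sqrt_mul (by norm_num : (0:ℝ) ≤ 16/25),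
        show Real.sqrt (16/25) = 4/5 by
          rw [show (16/25:ℝ) = (4/5)^2 by norm_num, Real.sqrt_sq (by norm_num)]]
    rw [h45, ← Real.sqrt_sq hres]
    exact Real.sqrt_le_sqrt hsre_sq
  have habs_s_ub : ‖s‖ ≤ 1 := by
    have hq : (‖s‖)^2 ≤ 1 := by
      rw [habs_s_sq, habsz]; nlinarith [hxp1_ub, ht0, hε1]
    nlinarith [norm_nonneg s]
  have hsre_ub : s.re ≤ 1 := le_trans (Complex.re_le_norm s) habs_s_ub
  set M := max (‖x+s‖) (‖x-s‖) with hM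
  have hM_lb : 1 + s.re ≤ M := by
    refine le_trans ?_ (le_max_left _ _)
    calc 1 + s.re ≤ x.re + s.re := by linarith
    _ = (x+s).re := by simp [Complex.add_re]
    _ ≤ ‖x+s‖ := Complex.re_le_norm _
  have hM_pos : 0 < M := lt_of_lt_of_le (by linarith) hM_lb
  have hbp : bernsteinParam x = Real.log M := by
    rw [hM, hsdef, hz]; rfl
  have hsqt0 : 0 ≤ Real.sqrt t := Real.sqrt_nonneg t
  constructor
  · rw [hbp]
    have l1 : Real.log (1 + s.re) ≤ Real.log M :=
      Real.log_le_log (by linarith) hM_lb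
    have l2 : s.re/2 ≤ Real.log (1+s.re) := half_le_log_one_add _ hres hsre_ub
    linarith
  · rw [hbp]
    have hts : t ≤ Real.sqrt t := by
      have h1' : t = Real.sqrt (t^2) := (Real.sqrt_sq ht0).symm
      have h2' : t^2 ≤ t := by nlinarith
      calc t = Real.sqrt (t^2) := h1'
      _ ≤ Real.sqrt t := Real.sqrt_le_sqrt h2'
    have habsx : ‖x‖ ≤ 1 + t := by
      have h := norm_add_le 1 (x - 1)
      have he : (1:ℂ) + (x-1) = x := by ring
      rw [he] at h; simpa [ht] using h
    have habss : ‖s‖ ≤ 2 * Real.sqrt t := by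
      have h1' : ‖s‖ = Real.sqrt (‖z‖) := by
        rw [← habs_s_sq, Real.sqrt_sq (norm_nonneg s)]
      have h2' : ‖z‖ ≤ 4 * t := by
        rw [habsz]; nlinarith [hxp1_ub, ht0]
      rw [h1']
      calc Real.sqrt (‖z‖) ≤ Real.sqrt (4*t) := Real.sqrt_le_sqrt h2'
      _ = 2 * Real.sqrt t := by
        rw [show (4:ℝ)*t = (2:ℝ)^2 * t by ring, Real.sqrt_mul (by positivity),
          Real.sqrt_sq (by norm_num)]
    have hMub : M ≤ 1 + 3 * Real.sqrt t := by
      have hA0 : ‖x+s‖ ≤ ‖x‖ + ‖s‖ :=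
        norm_add_le _ _
      have hB0 : ‖x-s‖ ≤ ‖x‖ + ‖s‖ := by
        simpa [sub_eq_add_neg] using norm_add_le x (-s)
      exact max_le (by linarith) (by linarith)
    have := Real.log_le_sub_one_of_pos hM_pos
    linarith

/-- For x → ±1 within the sector ±Re(x) - 1 ≥ C·|Im(x)|, the Bernstein-ellipse
    parameter satisfies α(x) = Θ(√|x ∓ 1|). -/
theorem bernsteinParam_endpoint_asymptotics (C : ℝ) (hC : 0 < C) :
    (∃ c C' ε : ℝ, 0 < c ∧ c ≤ C' ∧ 0 < ε ∧
      ∀ x : ℂ, ‖x - 1‖ < ε → x.re - 1 ≥ C * |x.im| →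
        c * Real.sqrt (‖x - 1‖) ≤ bernsteinParam x ∧
        bernsteinParam x ≤ C' * Real.sqrt (‖x - 1‖)) ∧
    (∃ c C' ε : ℝ, 0 < c ∧ c ≤ C' ∧ 0 < ε ∧
      ∀ x : ℂ, ‖x + 1‖ < ε → -x.re - 1 ≥ C * |x.im| →
        c * Real.sqrt (‖x + 1‖) ≤ bernsteinParam x ∧
        bernsteinParam x ≤ C' * Real.sqrt (‖x + 1‖)) := by
  constructor
  · exact bernstein_pos_side C hC
  · obtain ⟨c, C', ε, hc, hcC, hε, H⟩ := bernstein_pos_side C hC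
    refine ⟨c, C', ε, hc, hcC, hε, ?_⟩
    intro x hx1 hx2
    have he1 : ‖-x - 1‖ = ‖x + 1‖ := by
      rw [show -x - 1 = -(x+1) by ring, norm_neg]
    have he2 : (-x).re - 1 ≥ C * |(-x).im| := by
      simp only [Complex.neg_re, Complex.neg_im, abs_neg]
      exact hx2
    have := H (-x) (by rw [he1]; exact hx1) he2
    rw [bernsteinParam_neg, he1] at this
    exact this
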